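/- Fix reals 0 < r₂ < r₁ < 1 and N ≥ 1. Let σ be a uniformly random permutation of Fin N. For any nonempty finite subsets A, B ⊆ Fin N: (i) if J(A,B) ≥ r₁ then the probability that min{σ(a) : a ∈ A} = min{σ(b) : b ∈ B} is at least r₁; (ii) if J(A,B) ≤ r₂ then this probability is at most r₂. Hence the family of uniformly random permutations (used as MinHash functions) is (r₁, r₂, r₁, r₂)-sensitive for every choice r₁ > r₂. -/

import Mathlib

open MeasureTheory Finset
open scoped ENNReal

namespace MinhashAux

variable {N : ℕ}

/-- The element of `Fin N` achieving the minimum of `σ` over `U` (as the preimage of the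
minimum of the image). -/
noncomputable def amin (U : Finset (Fin N)) (hU : U.Nonempty) (σ : Equiv.Perm (Fin N)) :
    Fin N :=
  σ.symm ((U.image σ).min' (hU.image σ))

lemma mem_of_mem_image {s : Finset (Fin N)} {σ : Equiv.Perm (Fin N)} {m : Fin N}
    (h : m ∈ s.image σ) : σ.symm m ∈ s := by
  rcases Finset.mem_image.mp h with ⟨x, hx, hσ⟩
  simpa [← hσ] using hx

lemma amin_mem (U : Finset (Fin N)) (hU : U.Nonempty) (σ : Equiv.Perm (Fin N)) :
    amin U hU σ ∈ U :=
  mem_of_mem_image ((U.image σ).min'_mem (hU.image σ))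

lemma min'_congr {α : Type*} [LinearOrder α] {s t : Finset α} (h : s = t)
    (hs : s.Nonempty) (ht : t.Nonempty) : s.min' hs = t.min' ht := by
  subst h; rfl

/-- Characterization: the minima of the images of `A` and `B` agree iff the overall
argmin (over `A ∪ B`) lies in `A ∩ B`. -/
lemma min_eq_iff (A B : Finset (Fin N)) (hA : A.Nonempty) (hB : B.Nonempty)
    (hU : (A ∪ B).Nonempty) (σ : Equiv.Perm (Fin N)) :
    ((A.image σ).min' (hA.image σ) = (B.image σ).min' (hB.image σ)) ↔
      amin (A ∪ B) hU σ ∈ A ∩ B := by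
  set m := ((A ∪ B).image σ).min' (hU.image σ) with hm
  have himg : (A ∪ B).image σ = A.image σ ∪ B.image σ := Finset.image_union _ _
  have hmem : m ∈ A.image σ ∪ B.image σ := by
    rw [← himg]; exact Finset.min'_mem _ _
  have hle : ∀ z ∈ A.image σ ∪ B.image σ, m ≤ z := by
    intro z hz
    exact Finset.min'_le _ _ (himg ▸ hz)
  have hmA : m ≤ (A.image σ).min' (hA.image σ) :=
    hle _ (Finset.mem_union_left _ (Finset.min'_mem _ _))
  have hmB : m ≤ (B.image σ).min' (hB.image σ) :=
    hle _ (Finset.mem_union_right _ (Finset.min'_mem _ _))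
  constructor
  · intro h
    have hmAB : m ∈ A.image σ ∧ m ∈ B.image σ := by
      rcases Finset.mem_union.mp hmem with hc | hc
      · have : (A.image σ).min' (hA.image σ) ≤ m := Finset.min'_le _ _ hc
        have heq : (A.image σ).min' (hA.image σ) = m := le_antisymm this hmA
        exact ⟨hc, by rw [← heq, h]; exact Finset.min'_mem _ _⟩
      · have : (B.image σ).min' (hB.image σ) ≤ m := Finset.min'_le _ _ hc
        have heq : (B.image σ).min' (hB.image σ) = m := le_antisymm this hmB
        exact ⟨by rw [← heq, ← h]; exact Finset.min'_mem _ _, hc⟩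
    exact Finset.mem_inter.mpr ⟨mem_of_mem_image hmAB.1, mem_of_mem_image hmAB.2⟩
  · intro h
    rcases Finset.mem_inter.mp h with ⟨h1, h2⟩
    have hσm : σ (amin (A ∪ B) hU σ) = m := Equiv.apply_symm_apply _ _
    have hA' : (A.image σ).min' (hA.image σ) ≤ m := by
      refine Finset.min'_le _ _ ?_
      rw [← hσm]; exact Finset.mem_image_of_mem _ h1
    have hB' : (B.image σ).min' (hB.image σ) ≤ m := by
      refine Finset.min'_le _ _ ?_
      rw [← hσm]; exact Finset.mem_image_of_mem _ h2
    rw [le_antisymm hA' hmA, le_antisymm hB' hmB]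

lemma amin_mul_swap (U : Finset (Fin N)) (hU : U.Nonempty) {x y : Fin N}
    (hx : x ∈ U) (hy : y ∈ U) (σ : Equiv.Perm (Fin N)) :
    amin U hU (σ * Equiv.swap x y) = Equiv.swap x y (amin U hU σ) := by
  have hswap : U.image (Equiv.swap x y) = U := by
    have hmp := Finset.map_perm (s := U) (σ := Equiv.swap x y) ?_
    · rw [Finset.map_eq_image] at hmp
      simpa using hmp
    intro a ha
    by_contra h
    simp only [Finset.mem_coe] at h
    have hax : a ≠ x := by rintro rfl; exact h hx
    have hay : a ≠ y := by rintro rfl; exact h hy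
    exact ha (Equiv.swap_apply_of_ne_of_ne hax hay)
  have himg : U.image ((σ * Equiv.swap x y : Equiv.Perm (Fin N)) : Fin N → Fin N)
      = U.image σ := by
    have hco : ((σ * Equiv.swap x y : Equiv.Perm (Fin N)) : Fin N → Fin N)
        = σ ∘ (Equiv.swap x y) := rfl
    rw [hco, ← Finset.image_image, hswap]
  unfold amin
  rw [min'_congr himg (hU.image _) (hU.image _)]
  rw [Equiv.symm_apply_eq]
  simp [Equiv.Perm.mul_apply, Equiv.swap_apply_self]

/-- All argmin fibers over elements of `U` have the same cardinality. -/
lemma fiber_card_eq (U : Finset (Fin N)) (hU : U.Nonempty) {x y : Fin N}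
    (hx : x ∈ U) (hy : y ∈ U) :
    (Finset.univ.filter fun σ : Equiv.Perm (Fin N) => amin U hU σ = x).card =
    (Finset.univ.filter fun σ : Equiv.Perm (Fin N) => amin U hU σ = y).card := by
  classical
  refine Finset.card_nbij' (fun σ => σ * Equiv.swap x y) (fun σ => σ * Equiv.swap x y)
    ?_ ?_ ?_ ?_
  · intro σ hσ
    simp only [Finset.mem_coe, Finset.mem_filter, Finset.mem_univ, true_and] at hσ ⊢
    rw [amin_mul_swap U hU hx hy, hσ, Equiv.swap_apply_left]
  · intro σ hσ
    simp only [Finset.mem_coe, Finset.mem_filter, Finset.mem_univ, true_and] at hσ ⊢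
    rw [amin_mul_swap U hU hx hy, hσ, Equiv.swap_apply_right]
  · intro σ _
    simp [mul_assoc]
  · intro σ _
    simp [mul_assoc]

end MinhashAux

open MinhashAux

theorem minhash_lsh_sensitive (N : ℕ) (hN : 1 ≤ N) (r₁ r₂ : ℝ)
    (hr₂ : 0 < r₂) (hr : r₂ < r₁) (hr₁ : r₁ < 1)
    (A B : Finset (Fin N)) (hA : A.Nonempty) (hB : B.Nonempty) :
    letI : MeasurableSpace (Equiv.Perm (Fin N)) := ⊤
    (r₁ ≤ ((A ∩ B).card : ℝ) / ((A ∪ B).card : ℝ) →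
      ENNReal.ofReal r₁ ≤
        (PMF.uniformOfFintype (Equiv.Perm (Fin N))).toMeasure
          {σ : Equiv.Perm (Fin N) |
            (A.image σ).min' (hA.image σ) = (B.image σ).min' (hB.image σ)}) ∧
    (((A ∩ B).card : ℝ) / ((A ∪ B).card : ℝ) ≤ r₂ →
      (PMF.uniformOfFintype (Equiv.Perm (Fin N))).toMeasure
          {σ : Equiv.Perm (Fin N) |
            (A.image σ).min' (hA.image σ) = (B.image σ).min' (hB.image σ)}
        ≤ ENNReal.ofReal r₂) := by
  classical
  letI : MeasurableSpace (Equiv.Perm (Fin N)) := ⊤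
  have hU : (A ∪ B).Nonempty := hA.mono Finset.subset_union_left
  set U := A ∪ B with hUdef
  -- the event, as a finset
  set S : Finset (Equiv.Perm (Fin N)) :=
    Finset.univ.filter (fun σ => amin U hU σ ∈ A ∩ B) with hSdef
  -- fiber cardinality
  obtain ⟨x₀, hx₀⟩ := id hU
  set k : ℕ :=
    (Finset.univ.filter fun σ : Equiv.Perm (Fin N) => amin U hU σ = x₀).card with hkdef
  have hfiber : ∀ x ∈ U,
      (Finset.univ.filter fun σ : Equiv.Perm (Fin N) => amin U hU σ = x).card = k :=
    fun x hx => fiber_card_eq U hU hx hx₀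
  -- total count
  have htotal : Fintype.card (Equiv.Perm (Fin N)) = U.card * k := by
    have h1 : (Finset.univ : Finset (Equiv.Perm (Fin N))).card =
        ∑ x ∈ U, (Finset.univ.filter fun σ => amin U hU σ = x).card :=
      Finset.card_eq_sum_card_fiberwise (fun σ _ => amin_mem U hU σ)
    rw [← Finset.card_univ, h1, Finset.sum_congr rfl (fun x hx => hfiber x hx),
      Finset.sum_const, smul_eq_mul]
  -- event count
  have hScard : S.card = (A ∩ B).card * k := by
    have h1 : S.card = ∑ x ∈ A ∩ B, (S.filter fun σ => amin U hU σ = x).card := by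
      refine Finset.card_eq_sum_card_fiberwise ?_
      intro σ hσ
      simpa [hSdef] using hσ
    have h2 : ∀ x ∈ A ∩ B,
        (S.filter fun σ => amin U hU σ = x).card =
        (Finset.univ.filter fun σ : Equiv.Perm (Fin N) => amin U hU σ = x).card := by
      intro x hx
      congr 1
      rw [hSdef, Finset.filter_filter]
      apply Finset.filter_congr
      intro σ _
      constructor
      · rintro ⟨_, h⟩; exact h
      · rintro h; exact ⟨h ▸ hx, h⟩
    have h3 : ∀ x ∈ A ∩ B,
        (Finset.univ.filter fun σ : Equiv.Perm (Fin N) => amin U hU σ = x).card = k := by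
      intro x hx
      exact hfiber x (Finset.mem_union_left _ (Finset.mem_inter.mp hx).1)
    rw [h1, Finset.sum_congr rfl (fun x hx => (h2 x hx).trans (h3 x hx)),
      Finset.sum_const, smul_eq_mul]
  -- the event set equals the coercion of S
  have hset : {σ : Equiv.Perm (Fin N) |
      (A.image σ).min' (hA.image σ) = (B.image σ).min' (hB.image σ)} = ↑S := by
    ext σ
    simp only [Set.mem_setOf_eq, hSdef, Finset.coe_filter, Finset.mem_univ, true_and,
      Set.mem_setOf_eq]
    exact MinhashAux.min_eq_iff A B hA hB hU σ
  -- measurable singletons in the ⊤ σ-algebra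
  haveI : MeasurableSingletonClass (Equiv.Perm (Fin N)) :=
    ⟨fun _ => MeasurableSpace.measurableSet_top⟩
  -- compute the measure
  have hmeas : (PMF.uniformOfFintype (Equiv.Perm (Fin N))).toMeasure
      {σ : Equiv.Perm (Fin N) |
        (A.image σ).min' (hA.image σ) = (B.image σ).min' (hB.image σ)}
      = (S.card : ℝ≥0∞) / (Fintype.card (Equiv.Perm (Fin N)) : ℝ≥0∞) := by
    rw [hset, PMF.toMeasure_apply_finset, Finset.sum_congr rfl
      (fun σ _ => PMF.uniformOfFintype_apply σ), Finset.sum_const, nsmul_eq_mul,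
      div_eq_mul_inv]
  have hkne : k ≠ 0 := by
    intro hk
    have := htotal
    rw [hk, mul_zero] at this
    exact (Fintype.card_ne_zero (α := Equiv.Perm (Fin N))) this
  have hmeas2 : (PMF.uniformOfFintype (Equiv.Perm (Fin N))).toMeasure
      {σ : Equiv.Perm (Fin N) |
        (A.image σ).min' (hA.image σ) = (B.image σ).min' (hB.image σ)}
      = ((A ∩ B).card : ℝ≥0∞) / (U.card : ℝ≥0∞) := by
    rw [hmeas, hScard, htotal]
    push_cast
    rw [ENNReal.mul_div_mul_right _ _ (by exact_mod_cast hkne) (ENNReal.natCast_ne_top k)]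
  have hUpos : 0 < (U.card : ℝ) := by
    exact_mod_cast Finset.card_pos.mpr hU
  have hofReal : ENNReal.ofReal (((A ∩ B).card : ℝ) / (U.card : ℝ))
      = ((A ∩ B).card : ℝ≥0∞) / (U.card : ℝ≥0∞) := by
    rw [ENNReal.ofReal_div_of_pos hUpos, ENNReal.ofReal_natCast, ENNReal.ofReal_natCast]
  constructor
  · intro hJ
    rw [hmeas2, ← hofReal]
    exact ENNReal.ofReal_le_ofReal hJ
  · intro hJ
    rw [hmeas2, ← hofReal]
    exact ENNReal.ofReal_le_ofReal hJ
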